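/- Let Ω ⊆ ℝ^n be compact and nonempty and h : ℝ^n × ℝ^m → ℝ be twice continuously differentiable in its first variable. Fix λ' ∈ ℝ^m, suppose the inner solution set Ω*_{λ'} is nonempty, that every ω* ∈ Ω*_{λ'} satisfies ∇_ω h(ω*, λ') = 0, and that there is S > 0 such that ‖∇²_{ωω} h(ω, λ') v‖ ≥ S‖v‖ for all v ∈ ℝ^n whenever ∇_ω h(ω, λ') ≠ 0. Then for every ω ∈ Ω, the distance from ω to Ω*_{λ'} satisfies d(ω, Ω*_{λ'}) ≤ ‖∇_ω h(ω, λ')‖ / S. -/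

import Mathlib

open Set Filter Metric Topology

noncomputable section

/-- The inner solution set `Ω*_λ = {ω ∈ Ω : h(ω, λ) ≤ h(ω', λ) for all ω' ∈ Ω}`. -/
def innerSol {n m : ℕ}
    (h : EuclideanSpace ℝ (Fin n) × EuclideanSpace ℝ (Fin m) → ℝ)
    (Ω : Set (EuclideanSpace ℝ (Fin n))) (lam : EuclideanSpace ℝ (Fin m)) :
    Set (EuclideanSpace ℝ (Fin n)) :=
  {ω ∈ Ω | ∀ ω' ∈ Ω, h (ω, lam) ≤ h (ω', lam)}


section ExpansiveEngine

set_option linter.unusedSectionVars false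
set_option linter.unusedVariables false
set_option maxHeartbeats 4000000

variable {E : Type*} [NormedAddCommGroup E] [NormedSpace ℝ E] [FiniteDimensional ℝ E]

lemma engine_approx {g : E → E} {Dg : E → E →L[ℝ] E}
    (hg : ∀ x, HasFDerivAt g (Dg x) x) (hDgc : Continuous Dg)
    {ε : ℝ} (hε : 0 < ε) {K : Set E} (hK : IsCompact K) :
    ∃ r : ℝ, 0 < r ∧ r ≤ 1 ∧ ∀ p ∈ K, ∀ u ∈ closedBall p r, ∀ v ∈ closedBall p r,
      ‖g u - g v - Dg p (u - v)‖ ≤ ε * ‖u - v‖ := by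
  obtain ⟨RK, hRK⟩ := hK.isBounded.subset_closedBall (0 : E)
  have hK1 : IsCompact (closedBall (0 : E) (RK + 1)) := isCompact_closedBall _ _
  have hUC : UniformContinuousOn Dg (closedBall (0 : E) (RK + 1)) :=
    hK1.uniformContinuousOn_of_continuous hDgc.continuousOn
  obtain ⟨δ, hδ, hδ'⟩ := Metric.uniformContinuousOn_iff.mp hUC ε hε
  refine ⟨min (δ/2) 1, by positivity, min_le_right _ _, ?_⟩
  intro p hp u hu v hv
  have hpK1 : ∀ ξ ∈ closedBall p (min (δ/2) 1), ξ ∈ closedBall (0 : E) (RK + 1) := by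
    intro ξ hξ
    have h1 : dist ξ p ≤ min (δ/2) 1 := mem_closedBall.mp hξ
    have h2 : dist p 0 ≤ RK := mem_closedBall.mp (hRK hp)
    have := dist_triangle ξ p 0
    have hmin : min (δ/2) 1 ≤ 1 := min_le_right _ _
    exact mem_closedBall.mpr (by linarith)
  have hbound : ∀ ξ ∈ closedBall p (min (δ/2) 1), ‖Dg ξ - Dg p‖ ≤ ε := by
    intro ξ hξ
    have h1 : dist ξ p ≤ min (δ/2) 1 := mem_closedBall.mp hξ
    have hmin : min (δ/2) 1 ≤ δ/2 := min_le_left _ _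
    have hlt : dist ξ p < δ := by linarith
    have := hδ' ξ (hpK1 ξ hξ) p (hpK1 p (mem_closedBall_self (by positivity))) hlt
    rw [dist_eq_norm] at this
    exact this.le
  have hmvt := (convex_closedBall p (min (δ/2) 1)).norm_image_sub_le_of_norm_hasFDerivWithin_le
    (f := fun u => g u - Dg p u) (f' := fun ξ => Dg ξ - Dg p)
    (fun ξ hξ => ((hg ξ).sub ((Dg p).hasFDerivAt)).hasFDerivWithinAt) hbound hv hu
  have heq : (g u - Dg p u) - (g v - Dg p v) = g u - g v - Dg p (u - v) := by
    rw [map_sub]; abel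
  rw [heq] at hmvt
  exact hmvt

lemma engine_equiv {Dg : E → E →L[ℝ] E} {S : ℝ} (hS : 0 < S)
    (hS2 : ∀ x v, S * ‖v‖ ≤ ‖Dg x v‖) (x : E) :
    ∃ A' : E ≃L[ℝ] E, (A' : E →L[ℝ] E) = Dg x := by
  have hinj : Function.Injective (Dg x) := by
    intro v w hvw
    have h1 := hS2 x (v - w)
    rw [map_sub, hvw, sub_self, norm_zero] at h1
    have : ‖v - w‖ ≤ 0 := by nlinarith [norm_nonneg (v - w)]
    have : v - w = 0 := by
      have := norm_nonneg (v - w); exact norm_eq_zero.mp (le_antisymm ‹_› ‹_›)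
    exact sub_eq_zero.mp this
  have hker : LinearMap.ker (Dg x : E →ₗ[ℝ] E) = ⊥ := LinearMap.ker_eq_bot.mpr hinj
  have hsurj : LinearMap.range (Dg x : E →ₗ[ℝ] E) = ⊤ := by
    rw [LinearMap.range_eq_top]
    exact LinearMap.surjective_of_injective (f := (Dg x : E →ₗ[ℝ] E)) hinj
  exact ⟨ContinuousLinearEquiv.ofBijective (Dg x) hker hsurj,
    ContinuousLinearEquiv.coe_ofBijective _ _ _⟩

lemma engine_anti {g : E → E} {Dg : E → E →L[ℝ] E} {S : ℝ} (hS : 0 < S)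
    (hS2 : ∀ x v, S * ‖v‖ ≤ ‖Dg x v‖) {r : ℝ} {pc : E}
    (happrox : ∀ u ∈ closedBall pc r, ∀ v ∈ closedBall pc r,
      ‖g u - g v - Dg pc (u - v)‖ ≤ S/4 * ‖u - v‖)
    {u v : E} (hu : u ∈ closedBall pc r) (hv : v ∈ closedBall pc r) :
    S/2 * ‖u - v‖ ≤ ‖g u - g v‖ := by
  have h1 := hS2 pc (u - v)
  have h2 := happrox u hu v hv
  have h3 : ‖Dg pc (u - v)‖ ≤ ‖g u - g v‖ + ‖g u - g v - Dg pc (u - v)‖ := by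
    have h4 := norm_sub_le (g u - g v) (g u - g v - Dg pc (u - v))
    have h5 : g u - g v - (g u - g v - Dg pc (u - v)) = Dg pc (u - v) := by abel
    rwa [h5] at h4
  nlinarith [norm_nonneg (u - v), norm_nonneg (g u - g v)]

lemma engine_locSurj {g : E → E} {Dg : E → E →L[ℝ] E} {S : ℝ} (hS : 0 < S)
    (hS2 : ∀ x v, S * ‖v‖ ≤ ‖Dg x v‖) {r : ℝ} {pc : E}
    (happrox : ∀ u ∈ closedBall pc r, ∀ v ∈ closedBall pc r,
      ‖g u - g v - Dg pc (u - v)‖ ≤ S/4 * ‖u - v‖)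
    {ρ : ℝ} (hρ0 : 0 ≤ ρ) (hρr : ρ ≤ r) {y : E} (hy : ‖y - g pc‖ ≤ S/2 * ρ) :
    ∃ q, ‖q - pc‖ ≤ ρ ∧ g q = y := by
  obtain ⟨A', hA'⟩ := engine_equiv hS hS2 pc
  have hrinv_bound : ∀ w : E, ‖A'.symm w‖ ≤ (1/S) * ‖w‖ := by
    intro w
    have h1 := hS2 pc (A'.symm w)
    have h2 : Dg pc (A'.symm w) = w := by
      rw [← hA']
      exact A'.apply_symm_apply w
    rw [h2] at h1
    rw [show (1/S) * ‖w‖ = ‖w‖ / S by ring, le_div_iff₀ hS, mul_comm]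
    exact h1
  set rinv : (Dg pc).NonlinearRightInverse :=
    { toFun := A'.symm
      nnnorm := ⟨1/S, by positivity⟩
      bound' := hrinv_bound
      right_inv' := fun w => by rw [← hA']; exact A'.apply_symm_apply w }
  have hALO : ApproximatesLinearOn g (Dg pc) (closedBall pc r) ⟨S/4, by positivity⟩ :=
    fun u hu v hv => happrox u hu v hv
  have hsub : closedBall pc ρ ⊆ closedBall pc r := closedBall_subset_closedBall hρr
  have hsurj := hALO.surjOn_closedBall_of_nonlinearRightInverse rinv hρ0 hsub
  have hrad : S/2 * ρ ≤ (((rinv.nnnorm : ℝ))⁻¹ - (⟨S/4, by positivity⟩ : NNReal)) * ρ := by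
    have h1 : ((rinv.nnnorm : ℝ))⁻¹ = S := by
      show ((1:ℝ)/S)⁻¹ = S
      rw [one_div, inv_inv]
    rw [h1]
    show S/2 * ρ ≤ (S - S/4) * ρ
    nlinarith
  have hymem : y ∈ closedBall (g pc) ((((rinv.nnnorm : ℝ))⁻¹ - (⟨S/4, by positivity⟩ : NNReal)) * ρ) := by
    rw [mem_closedBall, dist_eq_norm]
    exact hy.trans hrad
  obtain ⟨q, hq1, hq2⟩ := hsurj hymem
  exact ⟨q, by rwa [mem_closedBall, dist_eq_norm] at hq1, hq2⟩

lemma engine_surj {g : E → E} {Dg : E → E →L[ℝ] E}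
    (hg : ∀ x, HasFDerivAt g (Dg x) x) (hDgc : Continuous Dg)
    {S : ℝ} (hS : 0 < S) (hS2 : ∀ x v, S * ‖v‖ ≤ ‖Dg x v‖) :
    Function.Surjective g := by
  intro y
  set d := ‖y - g 0‖ with hd_def
  have hd0 : 0 ≤ d := norm_nonneg _
  set K : Set E := closedBall (0 : E) ((2/S)*d + 1) with hK_def
  obtain ⟨r, hr0, hr1, happ⟩ := engine_approx hg hDgc (by positivity : (0:ℝ) < S/4)
    (isCompact_closedBall (0:E) ((2/S)*d + 1))
  obtain ⟨M0, hM0⟩ := exists_nat_gt ((2*d)/(S*r))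
  set M : ℕ := M0 + 1 with hM_def
  have hM1 : 1 ≤ M := Nat.le_add_left 1 M0
  have hMR : (0:ℝ) < M := by positivity
  have hMbig : (2*d)/(S*r) < M := lt_of_lt_of_le hM0 (by exact_mod_cast Nat.le_succ M0)
  set ρ : ℝ := (2/S) * (d/M) with hρ_def
  have hρ0 : 0 ≤ ρ := by positivity
  have hρr : ρ ≤ r := by
    rw [div_lt_iff₀ (by positivity : (0:ℝ) < S*r)] at hMbig
    have hcalc : ρ = (2*d)/(S*M) := by rw [hρ_def]; field_simp
    rw [hcalc, div_le_iff₀ (by positivity)]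
    nlinarith
  have main : ∀ j : ℕ, j ≤ M →
      ∃ z, g z = g 0 + ((j:ℝ)/M) • (y - g 0) ∧ ‖z - 0‖ ≤ (j:ℝ) * ρ := by
    intro j
    induction j with
    | zero => intro _; exact ⟨0, by simp, by simp⟩
    | succ j ih =>
      intro hj1
      obtain ⟨z, hz1, hz2⟩ := ih (Nat.le_of_succ_le hj1)
      have hzK : z ∈ K := by
        rw [hK_def, mem_closedBall, dist_eq_norm, sub_zero]
        have hjM : (j:ℝ) ≤ M := by exact_mod_cast Nat.le_of_succ_le hj1
        have : (j:ℝ) * ρ ≤ (M:ℝ) * ρ := by nlinarith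
        have hMρ : (M:ℝ) * ρ = (2/S)*d := by rw [hρ_def, mul_comm, mul_assoc, div_mul_cancel₀ d hMR.ne']
        rw [sub_zero] at hz2
        calc ‖z‖ ≤ (j:ℝ) * ρ := by simpa using hz2
          _ ≤ (2/S)*d := by rw [← hMρ]; exact this
          _ ≤ (2/S)*d + 1 := by linarith
      set y' : E := g 0 + (((j:ℝ)+1)/M) • (y - g 0) with hy'_def
      have hty : ‖y' - g z‖ ≤ S/2 * ρ := by
        rw [hy'_def, hz1]
        have : g 0 + (((j:ℝ)+1)/M) • (y - g 0) - (g 0 + ((j:ℝ)/M) • (y - g 0))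
            = ((((j:ℝ)+1)/M) - ((j:ℝ)/M)) • (y - g 0) := by
          rw [sub_smul]; abel
        rw [this]
        have hcoef : (((j:ℝ)+1)/M) - ((j:ℝ)/M) = 1/M := by field_simp; ring
        rw [hcoef, norm_smul]
        have : ‖(1/(M:ℝ))‖ = 1/M := by
          rw [Real.norm_eq_abs, abs_of_pos (by positivity)]
        rw [this]
        have : S/2 * ρ = d/M := by rw [hρ_def]; field_simp
        rw [this, hd_def]
        rw [div_mul_eq_mul_div, one_mul]
      obtain ⟨q, hq1, hq2⟩ := engine_locSurj hS hS2 (happ z hzK) hρ0 hρr hty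
      refine ⟨q, by rw [hq2, hy'_def]; push_cast; ring_nf, ?_⟩
      rw [sub_zero] at hz2 ⊢
      calc ‖q‖ ≤ ‖q - z‖ + ‖z‖ := by simpa using norm_add_le (q - z) z
        _ ≤ ρ + (j:ℝ) * ρ := by gcongr
        _ = ((j:ℝ)+1) * ρ := by ring
        _ = (((j+1 : ℕ)):ℝ) * ρ := by push_cast; ring
  obtain ⟨z, hz1, _⟩ := main M le_rfl
  refine ⟨z, ?_⟩
  rw [hz1, div_self (ne_of_gt hMR), one_smul]
  abel

lemma engine_inj {g : E → E} {Dg : E → E →L[ℝ] E}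
    (hg : ∀ x, HasFDerivAt g (Dg x) x) (hDgc : Continuous Dg)
    {S : ℝ} (hS : 0 < S) (hS2 : ∀ x v, S * ‖v‖ ≤ ‖Dg x v‖) :
    Function.Injective g := by
  intro a b hab
  set y := g a with hy_def
  set l : ℝ → E := fun s => a + s • (b - a) with hl_def
  set c : ℝ → E := fun s => g (l s) with hc_def
  have hgc : Continuous g :=
    continuous_iff_continuousAt.mpr (fun x => (hg x).differentiableAt.continuousAt)
  have hlc : Continuous l := by
    rw [hl_def]; fun_prop
  have hcc : Continuous c := hgc.comp hlc
  obtain ⟨Rc0, hRc0⟩ := (isCompact_Icc (a := (0:ℝ)) (b := 1)).exists_bound_of_continuousOn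
    ((hcc.sub continuous_const).continuousOn (s := Icc (0:ℝ) 1))
  set Rc := max Rc0 0 with hRc_def
  have hRc : ∀ s ∈ Icc (0:ℝ) 1, ‖c s - y‖ ≤ Rc :=
    fun s hs => (hRc0 s hs).trans (le_max_left _ _)
  have hRcnn : 0 ≤ Rc := le_max_right _ _
  set K : Set E := closedBall a (‖b - a‖ + (2/S)*Rc) with hK_def
  obtain ⟨r, hr0, hr1, happ⟩ := engine_approx hg hDgc
    (by positivity : (0:ℝ) < S/4) (isCompact_closedBall a (‖b - a‖ + (2/S)*Rc))
  -- derivative and Lipschitz bound of c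
  have hderc : ∀ s : ℝ, HasDerivAt c (Dg (l s) (b - a)) s := by
    intro s
    have h1 : HasDerivAt (fun s : ℝ => s • (b - a)) ((1:ℝ) • (b - a)) s :=
      (hasDerivAt_id s).smul_const (b - a)
    have h2 : HasDerivAt l (b - a) s := by
      have := h1.const_add a; rw [one_smul] at this; exact this
    exact (hg (l s)).comp_hasDerivAt s h2
  have hDlc : Continuous fun s : ℝ => Dg (l s) (b - a) :=
    (ContinuousLinearMap.apply ℝ E (b - a)).continuous.comp (hDgc.comp hlc)
  obtain ⟨L0, hL0⟩ := (isCompact_Icc (a := (0:ℝ)) (b := 1)).exists_bound_of_continuousOn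
    (hDlc.continuousOn (s := Icc (0:ℝ) 1))
  set L := max L0 0 with hL_def
  have hL : ∀ s ∈ Icc (0:ℝ) 1, ‖Dg (l s) (b - a)‖ ≤ L :=
    fun s hs => (hL0 s hs).trans (le_max_left _ _)
  have hLnn : 0 ≤ L := le_max_right _ _
  have hclip : ∀ s ∈ Icc (0:ℝ) 1, ∀ t ∈ Icc (0:ℝ) 1, ‖c s - c t‖ ≤ L * |s - t| := by
    intro s hs t ht
    have := (convex_Icc (0:ℝ) 1).norm_image_sub_le_of_norm_hasDerivWithin_le
      (f := c) (f' := fun s => Dg (l s) (b - a))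
      (fun u hu => (hderc u).hasDerivWithinAt) hL ht hs
    simpa [Real.norm_eq_abs] using this
  -- choose N and M
  obtain ⟨N0, hN0⟩ := exists_nat_gt (max ((4*‖b-a‖)/r) ((8*L)/(S*r)))
  set N : ℕ := N0 + 1 with hN_def
  have hNR : (0:ℝ) < N := by positivity
  have hNb : max ((4*‖b-a‖)/r) ((8*L)/(S*r)) < (N:ℝ) :=
    lt_of_lt_of_le hN0 (by exact_mod_cast Nat.le_succ N0)
  have hNl : ‖b-a‖/N ≤ r/4 := by
    have h1 : (4*‖b-a‖)/r < (N:ℝ) := lt_of_le_of_lt (le_max_left _ _) hNb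
    rw [div_lt_iff₀ hr0] at h1
    rw [div_le_div_iff₀ hNR (by norm_num : (0:ℝ) < 4)]
    nlinarith
  have hNL : (2/S)*(L/N) ≤ r/4 := by
    have h1 : (8*L)/(S*r) < (N:ℝ) := lt_of_le_of_lt (le_max_right _ _) hNb
    rw [div_lt_iff₀ (by positivity)] at h1
    have hexp : (2/S)*(L/N) = (2*L)/(S*N) := by field_simp
    rw [hexp, div_le_div_iff₀ (by positivity) (by norm_num : (0:ℝ) < 4)]
    nlinarith
  obtain ⟨M0, hM0⟩ := exists_nat_gt ((16*Rc)/(S*r))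
  set M : ℕ := M0 + 1 with hM_def
  have hMR : (0:ℝ) < M := by positivity
  have hMb : (16*Rc)/(S*r) < (M:ℝ) := lt_of_lt_of_le hM0 (by exact_mod_cast Nat.le_succ M0)
  set ρv : ℝ := (2/S)*(Rc/M) with hρv_def
  have hρv0 : 0 ≤ ρv := by positivity
  have hρv8 : ρv ≤ r/8 := by
    rw [div_lt_iff₀ (by positivity)] at hMb
    have hexp : ρv = (2*Rc)/(S*M) := by rw [hρv_def]; field_simp
    rw [hexp, div_le_div_iff₀ (by positivity) (by norm_num : (0:ℝ) < 8)]
    nlinarith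
  have hMρv : (M:ℝ) * ρv = (2/S)*Rc := by rw [hρv_def]; field_simp
  -- membership helper
  have hmemK : ∀ (x : E) (i : ℕ) (k : ℕ), k ≤ M → i ≤ N →
      ‖x - l ((i:ℝ)/N)‖ ≤ (k:ℝ) * ρv → x ∈ K := by
    intro x i k hk hi hx
    rw [hK_def, mem_closedBall, dist_eq_norm]
    have h1 : ‖l ((i:ℝ)/N) - a‖ ≤ ‖b - a‖ := by
      rw [hl_def]
      simp only [add_sub_cancel_left]
      rw [norm_smul, Real.norm_eq_abs, abs_of_nonneg (by positivity)]
      have : (i:ℝ)/N ≤ 1 := by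
        rw [div_le_one hNR]; exact_mod_cast hi
      nlinarith [norm_nonneg (b - a)]
    have h2 : (k:ℝ) * ρv ≤ (M:ℝ) * ρv := by
      have : (k:ℝ) ≤ M := by exact_mod_cast hk
      nlinarith
    calc ‖x - a‖ ≤ ‖x - l ((i:ℝ)/N)‖ + ‖l ((i:ℝ)/N) - a‖ := by
          simpa using norm_add_le (x - l ((i:ℝ)/N)) (l ((i:ℝ)/N) - a)
      _ ≤ (M:ℝ)*ρv + ‖b - a‖ := by linarith
      _ = ‖b - a‖ + (2/S)*Rc := by rw [hMρv]; ring
  -- i/N ∈ Icc 0 1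
  have hiIcc : ∀ i : ℕ, i ≤ N → ((i:ℝ)/N) ∈ Icc (0:ℝ) 1 := by
    intro i hi
    constructor
    · positivity
    · rw [div_le_one hNR]; exact_mod_cast hi
  -- endpoint values
  have hl0 : l 0 = a := by rw [hl_def]; simp
  have hl1 : l 1 = b := by rw [hl_def]; simp
  have hc0 : c 0 = y := by
    rw [hy_def]
    show g (l 0) = g a
    rw [hl0]
  have hc1 : c 1 = y := by
    rw [hab]
    show g (l 1) = g b
    rw [hl1]
  have hrv_r : ρv ≤ r := by linarith
  -- the grid induction
  have grid : ∀ k : ℕ, k ≤ M → ∃ x : ℕ → E,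
      (∀ i ≤ N, g (x i) = y + (((M:ℝ) - (k:ℝ))/M) • (c ((i:ℝ)/N) - y)) ∧
      (∀ i < N, ‖x (i+1) - x i‖ ≤ r/4) ∧
      (∀ i ≤ N, ‖x i - l ((i:ℝ)/N)‖ ≤ (k:ℝ) * ρv) ∧
      x 0 = a ∧ x N = b := by
    intro k
    induction k with
    | zero =>
      intro _
      refine ⟨fun i => l ((i:ℝ)/N), ?_, ?_, ?_, ?_, ?_⟩
      · intro i hi
        have h1 : ((M:ℝ) - ((0:ℕ):ℝ))/M = 1 := by
          rw [Nat.cast_zero, sub_zero]; exact div_self (ne_of_gt hMR)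
        rw [h1, one_smul]
        show g (l ((i:ℝ)/N)) = y + (g (l ((i:ℝ)/N)) - y)
        abel
      · intro i hi
        have h1 : l ((((i+1:ℕ)):ℝ)/N) - l ((i:ℝ)/N)
            = (((((i+1:ℕ)):ℝ)/N) - ((i:ℝ)/N)) • (b - a) := by
          rw [hl_def]; simp only [sub_smul]; abel
        have h2 : ((((i+1:ℕ)):ℝ)/N) - ((i:ℝ)/N) = 1/N := by
          push_cast; field_simp; ring
        rw [h1, h2, norm_smul, Real.norm_eq_abs, abs_of_pos (by positivity)]
        calc (1/(N:ℝ)) * ‖b - a‖ = ‖b - a‖/N := by ring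
          _ ≤ r/4 := hNl
      · intro i hi; simp
      · show l (((0:ℕ):ℝ)/N) = a
        norm_num [hl0]
      · show l (((N:ℕ):ℝ)/N) = b
        rw [div_self (ne_of_gt hNR), hl1]
    | succ k ih =>
      intro hk1
      obtain ⟨x, hx1, hx2, hx3, hx4, hx5⟩ := ih (Nat.le_of_succ_le hk1)
      have hk1R : (k:ℝ) + 1 ≤ M := by exact_mod_cast hk1
      have hxK : ∀ i ≤ N, x i ∈ K :=
        fun i hi => hmemK (x i) i k (Nat.le_of_succ_le hk1) hi (hx3 i hi)
      set T : ℕ → E := fun i => y + (((M:ℝ) - ((k:ℝ)+1))/M) • (c ((i:ℝ)/N) - y) with hT_def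
      have hcoef0 : 0 ≤ ((M:ℝ) - ((k:ℝ)+1))/M := by
        apply div_nonneg _ (le_of_lt hMR); linarith
      have hcoef1 : ((M:ℝ) - ((k:ℝ)+1))/M ≤ 1 := by
        rw [div_le_one hMR]; linarith
      have hstep : ∀ i : ℕ, ∃ q, i ≤ N → (‖q - x i‖ ≤ ρv ∧ g q = T i) := by
        intro i
        by_cases hi : i ≤ N
        · have htarg : ‖T i - g (x i)‖ ≤ S/2 * ρv := by
            rw [hx1 i hi, hT_def]
            have hdiff : y + (((M:ℝ) - ((k:ℝ)+1))/M) • (c ((i:ℝ)/N) - y)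
                - (y + (((M:ℝ) - (k:ℝ))/M) • (c ((i:ℝ)/N) - y))
                = ((((M:ℝ) - ((k:ℝ)+1))/M) - (((M:ℝ) - (k:ℝ))/M)) • (c ((i:ℝ)/N) - y) := by
              rw [sub_smul]; abel
            rw [hdiff]
            have hco : (((M:ℝ) - ((k:ℝ)+1))/M) - (((M:ℝ) - (k:ℝ))/M) = -(1/M) := by
              field_simp; ring
            rw [hco, norm_smul, Real.norm_eq_abs, abs_neg, abs_of_pos (by positivity)]
            have h2 : ‖c ((i:ℝ)/N) - y‖ ≤ Rc := hRc _ (hiIcc i hi)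
            have h3 : S/2 * ρv = Rc/M := by rw [hρv_def]; field_simp
            rw [h3]
            calc (1/(M:ℝ)) * ‖c ((i:ℝ)/N) - y‖ ≤ (1/(M:ℝ)) * Rc := by
                  apply mul_le_mul_of_nonneg_left h2 (by positivity)
              _ = Rc/M := by ring
          obtain ⟨q, hq1, hq2⟩ :=
            engine_locSurj hS hS2 (happ (x i) (hxK i hi)) hρv0 hrv_r htarg
          exact ⟨q, fun _ => ⟨hq1, hq2⟩⟩
        · exact ⟨x i, fun h => absurd h hi⟩
      choose x' hx' using hstep
      have hgx' : ∀ i ≤ N, g (x' i) = T i := fun i hi => (hx' i hi).2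
      have hdx' : ∀ i ≤ N, ‖x' i - x i‖ ≤ ρv := fun i hi => (hx' i hi).1
      refine ⟨x', ?_, ?_, ?_, ?_, ?_⟩
      · intro i hi
        rw [hgx' i hi, hT_def]
        push_cast
        norm_num
      · -- adjacency
        intro i hi
        have hi1 : i ≤ N := le_of_lt hi
        have hi2 : i + 1 ≤ N := hi
        have hu : x' (i+1) ∈ closedBall (x i) r := by
          rw [mem_closedBall, dist_eq_norm]
          calc ‖x' (i+1) - x i‖ ≤ ‖x' (i+1) - x (i+1)‖ + ‖x (i+1) - x i‖ := by
                simpa using norm_add_le (x' (i+1) - x (i+1)) (x (i+1) - x i)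
            _ ≤ ρv + r/4 := add_le_add (hdx' (i+1) hi2) (hx2 i hi)
            _ ≤ r := by linarith
        have hv : x' i ∈ closedBall (x i) r := by
          rw [mem_closedBall, dist_eq_norm]
          exact (hdx' i hi1).trans hrv_r
        have hanti := engine_anti hS hS2 (happ (x i) (hxK i hi1)) hu hv
        rw [hgx' (i+1) hi2, hgx' i hi1] at hanti
        have hTd : T (i+1) - T i
            = (((M:ℝ) - ((k:ℝ)+1))/M) • (c ((((i+1:ℕ)):ℝ)/N) - c ((i:ℝ)/N)) := by
          show (y + (((M:ℝ) - ((k:ℝ)+1))/M) • (c ((((i+1:ℕ)):ℝ)/N) - y))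
              - (y + (((M:ℝ) - ((k:ℝ)+1))/M) • (c ((i:ℝ)/N) - y))
              = (((M:ℝ) - ((k:ℝ)+1))/M) • (c ((((i+1:ℕ)):ℝ)/N) - c ((i:ℝ)/N))
          rw [smul_sub, smul_sub, smul_sub]
          abel
        rw [hTd, norm_smul, Real.norm_eq_abs, abs_of_nonneg hcoef0] at hanti
        have hcdiff : ‖c ((((i+1:ℕ)):ℝ)/N) - c ((i:ℝ)/N)‖ ≤ L/N := by
          have := hclip _ (hiIcc (i+1) hi2) _ (hiIcc i hi1)
          have habs : |((((i+1:ℕ)):ℝ)/N) - ((i:ℝ)/N)| = 1/N := by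
            push_cast
            rw [div_sub_div_same]
            rw [show ((i:ℝ) + 1 - (i:ℝ)) = 1 by ring]
            rw [abs_of_pos (by positivity)]
          rw [habs] at this
          calc ‖c ((((i+1:ℕ)):ℝ)/N) - c ((i:ℝ)/N)‖ ≤ L * (1/N) := this
            _ = L/N := by ring
        have hfin : S/2 * ‖x' (i+1) - x' i‖ ≤ L/N := by
          calc S/2 * ‖x' (i+1) - x' i‖
              ≤ (((M:ℝ) - ((k:ℝ)+1))/M) * ‖c ((((i+1:ℕ)):ℝ)/N) - c ((i:ℝ)/N)‖ := hanti
            _ ≤ 1 * (L/N) := by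
                apply mul_le_mul hcoef1 hcdiff (norm_nonneg _) zero_le_one
            _ = L/N := one_mul _
        have h2SL : (2/S) * (L/N) ≤ r/4 := hNL
        have hX : ‖x' (i+1) - x' i‖ ≤ (2/S) * (L/N) := by
          have h3 := mul_le_mul_of_nonneg_left hfin (by positivity : (0:ℝ) ≤ 2/S)
          have hSS : (2/S) * (S/2) = 1 := by field_simp
          calc ‖x' (i+1) - x' i‖ = ((2/S) * (S/2)) * ‖x' (i+1) - x' i‖ := by
                rw [hSS, one_mul]
            _ = (2/S) * (S/2 * ‖x' (i+1) - x' i‖) := by ring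
            _ ≤ (2/S) * (L/N) := h3
        linarith
      · intro i hi
        calc ‖x' i - l ((i:ℝ)/N)‖ ≤ ‖x' i - x i‖ + ‖x i - l ((i:ℝ)/N)‖ := by
              simpa using norm_add_le (x' i - x i) (x i - l ((i:ℝ)/N))
          _ ≤ ρv + (k:ℝ) * ρv := add_le_add (hdx' i hi) (hx3 i hi)
          _ = ((k+1:ℕ):ℝ) * ρv := by push_cast; ring
      · -- left column
        have h0N : 0 ≤ N := Nat.zero_le N
        have hT0 : T 0 = y := by
          rw [hT_def]
          simp only [Nat.cast_zero, zero_div, hc0, sub_self, smul_zero, add_zero]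
        have hu : x' 0 ∈ closedBall (x 0) r := by
          rw [mem_closedBall, dist_eq_norm]
          exact (hdx' 0 h0N).trans hrv_r
        have hv : a ∈ closedBall (x 0) r := by
          rw [hx4]; exact mem_closedBall_self hr0.le
        have hanti := engine_anti hS hS2 (happ (x 0) (hxK 0 h0N)) hu hv
        rw [hgx' 0 h0N, hT0, ← hy_def, sub_self, norm_zero] at hanti
        have : ‖x' 0 - a‖ = 0 := by nlinarith [norm_nonneg (x' 0 - a)]
        exact sub_eq_zero.mp (norm_eq_zero.mp this)
      · -- right column
        have hTN : T N = y := by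
          rw [hT_def]
          simp only [div_self (ne_of_gt hNR), hc1, sub_self, smul_zero, add_zero]
        have hu : x' N ∈ closedBall (x N) r := by
          rw [mem_closedBall, dist_eq_norm]
          exact (hdx' N le_rfl).trans hrv_r
        have hv : b ∈ closedBall (x N) r := by
          rw [hx5]; exact mem_closedBall_self hr0.le
        have hanti := engine_anti hS hS2 (happ (x N) (hxK N le_rfl)) hu hv
        rw [hgx' N le_rfl, hTN, ← hab, sub_self, norm_zero] at hanti
        have : ‖x' N - b‖ = 0 := by nlinarith [norm_nonneg (x' N - b)]
        exact sub_eq_zero.mp (norm_eq_zero.mp this)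
  -- conclude from the last row
  obtain ⟨x, hx1, hx2, hx3, hx4, hx5⟩ := grid M le_rfl
  have hall : ∀ i ≤ N, g (x i) = y := by
    intro i hi
    rw [hx1 i hi, sub_self, zero_div, zero_smul, add_zero]
  have hxK : ∀ i ≤ N, x i ∈ K := fun i hi => hmemK (x i) i M le_rfl hi (hx3 i hi)
  have hconst : ∀ i, i ≤ N → x i = x 0 := by
    intro i
    induction i with
    | zero => intro _; rfl
    | succ i ih =>
      intro hi
      have hiN : i ≤ N := Nat.le_of_succ_le hi
      have hilt : i < N := Nat.lt_of_succ_le hi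
      have hu : x (i+1) ∈ closedBall (x i) r := by
        rw [mem_closedBall, dist_eq_norm]
        exact (hx2 i hilt).trans (by linarith)
      have hv : x i ∈ closedBall (x i) r := mem_closedBall_self hr0.le
      have hanti := engine_anti hS hS2 (happ (x i) (hxK i hiN)) hu hv
      rw [hall (i+1) hi, hall i hiN, sub_self, norm_zero] at hanti
      have : ‖x (i+1) - x i‖ = 0 := by nlinarith [norm_nonneg (x (i+1) - x i)]
      rw [sub_eq_zero.mp (norm_eq_zero.mp this), ih hiN]
  have hfin := hconst N le_rfl
  rw [hx5, hx4] at hfin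
  exact hfin.symm

lemma engine_key {g : E → E} {Dg : E → E →L[ℝ] E}
    (hg : ∀ x, HasFDerivAt g (Dg x) x) (hDgc : Continuous Dg)
    {S : ℝ} (hS : 0 < S) (hS2 : ∀ x v, S * ‖v‖ ≤ ‖Dg x v‖)
    {a x : E} (ha : g a = 0) : ‖x - a‖ ≤ ‖g x‖ / S := by
  have hinj : Function.Injective g := engine_inj hg hDgc hS hS2
  have hsurj : Function.Surjective g := engine_surj hg hDgc hS hS2
  have : Nonempty E := ⟨a⟩
  set G : E → E := Function.invFun g with hG_def
  have hright : ∀ w, g (G w) = w := fun w => Function.rightInverse_invFun hsurj w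
  have hleft : ∀ z, G (g z) = z := fun z => Function.leftInverse_invFun hinj z
  have hder : ∀ w : E, ∃ B : E →L[ℝ] E, ‖B‖ ≤ 1/S ∧ HasFDerivAt G B w := by
    intro w
    set z := G w with hz_def
    obtain ⟨A', hA'⟩ := engine_equiv hS hS2 z
    have hstrict : HasStrictFDerivAt g (A' : E →L[ℝ] E) z := by
      rw [hA']
      exact hasStrictFDerivAt_of_hasFDerivAt_of_continuousAt
        (Filter.Eventually.of_forall hg) hDgc.continuousAt
    have hGstrict : HasStrictFDerivAt G (A'.symm : E →L[ℝ] E) (g z) :=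
      hstrict.to_local_left_inverse (Filter.Eventually.of_forall hleft)
    have hgz : g z = w := hright w
    rw [hgz] at hGstrict
    refine ⟨(A'.symm : E →L[ℝ] E), ?_, hGstrict.hasFDerivAt⟩
    apply ContinuousLinearMap.opNorm_le_bound _ (by positivity)
    intro u
    have h1 := hS2 z (A'.symm u)
    have h2 : Dg z (A'.symm u) = u := by rw [← hA']; exact A'.apply_symm_apply u
    rw [h2] at h1
    rw [show (1/S) * ‖u‖ = ‖u‖/S by ring, le_div_iff₀ hS, mul_comm]
    exact h1
  set B : E → E →L[ℝ] E := fun w => Classical.choose (hder w) with hB_def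
  have hB1 : ∀ w, ‖B w‖ ≤ 1/S := fun w => (Classical.choose_spec (hder w)).1
  have hB2 : ∀ w, HasFDerivAt G (B w) w := fun w => (Classical.choose_spec (hder w)).2
  have hlip := (convex_univ (𝕜 := ℝ) (E := E)).norm_image_sub_le_of_norm_hasFDerivWithin_le
    (f := G) (f' := B) (fun w _ => (hB2 w).hasFDerivWithinAt)
    (fun w _ => hB1 w) (mem_univ (0 : E)) (mem_univ (g x))
  rw [sub_zero] at hlip
  have hGx : G (g x) = x := hleft x
  have hG0 : G 0 = a := by rw [← ha]; exact hleft a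
  rw [hGx, hG0] at hlip
  calc ‖x - a‖ ≤ 1/S * ‖g x‖ := hlip
    _ = ‖g x‖ / S := by ring

end ExpansiveEngine

/-- The quantitative error-bound step in the proof of Proposition 1: a uniform
lower bound on the inner Hessian away from critical points turns a small inner
gradient into a small distance to the inner solution set. -/
theorem dist_to_inner_solution_set_le {n m : ℕ}
    (Ω : Set (EuclideanSpace ℝ (Fin n))) (hΩc : IsCompact Ω) (hΩne : Ω.Nonempty)
    (h : EuclideanSpace ℝ (Fin n) × EuclideanSpace ℝ (Fin m) → ℝ)
    (hsmooth : ∀ lam : EuclideanSpace ℝ (Fin m), ContDiff ℝ 2 (fun ω => h (ω, lam)))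
    (lam' : EuclideanSpace ℝ (Fin m))
    (hne : (innerSol h Ω lam').Nonempty)
    (hcrit : ∀ ωstar ∈ innerSol h Ω lam', gradient (fun ω => h (ω, lam')) ωstar = 0)
    (S : ℝ) (hS : 0 < S)
    (hHess : ∀ ω : EuclideanSpace ℝ (Fin n),
      gradient (fun x => h (x, lam')) ω ≠ 0 →
      ∀ v : EuclideanSpace ℝ (Fin n),
        S * ‖v‖ ≤ ‖fderiv ℝ (fun x => gradient (fun y => h (y, lam')) x) ω v‖) :
    ∀ ω ∈ Ω,
      Metric.infDist ω (innerSol h Ω lam') ≤ ‖gradient (fun x => h (x, lam')) ω‖ / S := by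
  classical
  intro ω hω
  by_cases hg0 : ∀ x : EuclideanSpace ℝ (Fin n), gradient (fun y => h (y, lam')) x = 0
  · -- the inner function is constant; ω itself is an inner solution
    have hdiff : Differentiable ℝ (fun x : EuclideanSpace ℝ (Fin n) => h (x, lam')) :=
      (hsmooth lam').differentiable (by norm_num)
    have hfz : ∀ x, fderiv ℝ (fun x : EuclideanSpace ℝ (Fin n) => h (x, lam')) x = 0 := by
      intro x
      have h1 := hg0 x
      unfold gradient at h1
      exact (LinearIsometryEquiv.map_eq_zero_iff _).mp h1
    have hconst : ∀ p q : EuclideanSpace ℝ (Fin n), h (p, lam') = h (q, lam') :=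
      fun p q => is_const_of_fderiv_eq_zero hdiff hfz p q
    have hmem : ω ∈ innerSol h Ω lam' := ⟨hω, fun ω' _ => le_of_eq (hconst ω ω')⟩
    have h0 := Metric.infDist_le_dist_of_mem (x := ω) hmem
    rw [dist_self] at h0
    exact h0.trans (by positivity)
  · push_neg at hg0
    obtain ⟨x₀, hx₀⟩ := hg0
    -- the gradient map is C¹
    have hcd : ContDiff ℝ 1 (fun x : EuclideanSpace ℝ (Fin n) => gradient (fun y => h (y, lam')) x) := by
      have h1 : ContDiff ℝ 1 (fderiv ℝ (fun y : EuclideanSpace ℝ (Fin n) => h (y, lam'))) :=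
        (hsmooth lam').fderiv_right (by norm_num : (1 : WithTop ℕ∞) + 1 ≤ 2)
      exact ((InnerProductSpace.toDual ℝ (EuclideanSpace ℝ (Fin n))).symm.contDiff).comp h1
    have hgdiff : Differentiable ℝ (fun x : EuclideanSpace ℝ (Fin n) => gradient (fun y => h (y, lam')) x) :=
      hcd.differentiable (by norm_num)
    have hgD : ∀ x, HasFDerivAt (fun x : EuclideanSpace ℝ (Fin n) => gradient (fun y => h (y, lam')) x)
        (fderiv ℝ (fun x : EuclideanSpace ℝ (Fin n) => gradient (fun y => h (y, lam')) x) x) x :=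
      fun x => (hgdiff x).hasFDerivAt
    have hDgc : Continuous (fderiv ℝ (fun x : EuclideanSpace ℝ (Fin n) => gradient (fun y => h (y, lam')) x)) :=
      hcd.continuous_fderiv (by norm_num)
    -- closed superset fact
    have hcl : ∀ p ∈ closure {x : EuclideanSpace ℝ (Fin n) | gradient (fun y => h (y, lam')) x ≠ 0}, ∀ v : EuclideanSpace ℝ (Fin n),
        S * ‖v‖ ≤ ‖fderiv ℝ (fun x : EuclideanSpace ℝ (Fin n) => gradient (fun y => h (y, lam')) x) p v‖ := by
      intro p hp v
      have hclosed : IsClosed {x : EuclideanSpace ℝ (Fin n) |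
          S * ‖v‖ ≤ ‖fderiv ℝ (fun x : EuclideanSpace ℝ (Fin n) => gradient (fun y => h (y, lam')) x) x v‖} :=
        isClosed_le continuous_const
          ((ContinuousLinearMap.apply ℝ (EuclideanSpace ℝ (Fin n)) v).continuous.comp hDgc).norm
      have hsub : {x : EuclideanSpace ℝ (Fin n) | gradient (fun y => h (y, lam')) x ≠ 0} ⊆
          {x : EuclideanSpace ℝ (Fin n) |
            S * ‖v‖ ≤ ‖fderiv ℝ (fun x : EuclideanSpace ℝ (Fin n) => gradient (fun y => h (y, lam')) x) x v‖} :=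
        fun x hx => hHess x hx v
      exact closure_minimal hsub hclosed hp
    -- the everywhere Hessian bound, via a clopen argument
    have hS2 : ∀ x v : EuclideanSpace ℝ (Fin n), S * ‖v‖ ≤
        ‖fderiv ℝ (fun x : EuclideanSpace ℝ (Fin n) => gradient (fun y => h (y, lam')) x) x v‖ := by
      haveI : PathConnectedSpace (EuclideanSpace ℝ (Fin n)) := IsTopologicalAddGroup.pathConnectedSpace
      haveI hnt : Nontrivial (EuclideanSpace ℝ (Fin n)) := nontrivial_of_ne _ _ hx₀
      set Z : Set (EuclideanSpace ℝ (Fin n)) := {x : EuclideanSpace ℝ (Fin n) | gradient (fun y => h (y, lam')) x = 0} with hZ_def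
      have hZc : {x : EuclideanSpace ℝ (Fin n) | gradient (fun y => h (y, lam')) x ≠ 0} = Zᶜ := by
        rw [hZ_def, Set.compl_setOf]
      have hUsub : closure (interior Z) ⊆ interior Z := by
        intro p hp
        have hDg0 : fderiv ℝ (fun x : EuclideanSpace ℝ (Fin n) => gradient (fun y => h (y, lam')) x) p = 0 := by
          have hsub : interior Z ⊆
              {x : EuclideanSpace ℝ (Fin n) | fderiv ℝ (fun x : EuclideanSpace ℝ (Fin n) => gradient (fun y => h (y, lam')) x) x = 0} := by
            intro u hu
            have hnb : Z ∈ 𝓝 u := mem_interior_iff_mem_nhds.mp hu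
            have heq : (fun x : EuclideanSpace ℝ (Fin n) => gradient (fun y => h (y, lam')) x) =ᶠ[𝓝 u]
                (fun _ => (0:EuclideanSpace ℝ (Fin n))) := Filter.eventually_of_mem hnb (fun x hx => hx)
            show fderiv ℝ (fun x : EuclideanSpace ℝ (Fin n) => gradient (fun y => h (y, lam')) x) u = 0
            rw [heq.fderiv_eq]
            exact fderiv_const_apply 0
          exact closure_minimal hsub (isClosed_eq hDgc continuous_const) hp
        by_contra hpU
        have hpcl : p ∈ closure {x : EuclideanSpace ℝ (Fin n) | gradient (fun y => h (y, lam')) x ≠ 0} := by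
          rw [hZc, closure_compl]
          exact hpU
        obtain ⟨v, hv⟩ := exists_ne (0 : EuclideanSpace ℝ (Fin n))
        have hle := hcl p hpcl v
        rw [hDg0] at hle
        simp only [ContinuousLinearMap.zero_apply, norm_zero] at hle
        have hvpos : 0 < ‖v‖ := norm_pos_iff.mpr hv
        nlinarith
      have hclopen : IsClopen (interior Z) := ⟨isClosed_of_closure_subset hUsub, isOpen_interior⟩
      rcases isClopen_iff.mp hclopen with hU | hU
      · intro x v
        apply hcl x _ v
        rw [hZc, closure_compl]
        rw [hU]
        exact notMem_empty x
      · exfalso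
        have hx₀Z : x₀ ∈ Z := interior_subset (by rw [hU]; exact mem_univ x₀)
        exact hx₀ hx₀Z
    obtain ⟨ωs, hωs⟩ := hne
    have hgωs : (fun x : EuclideanSpace ℝ (Fin n) => gradient (fun y => h (y, lam')) x) ωs = 0 := hcrit ωs hωs
    have hkey := engine_key hgD hDgc hS hS2 (a := ωs) (x := ω) hgωs
    calc Metric.infDist ω (innerSol h Ω lam') ≤ dist ω ωs := Metric.infDist_le_dist_of_mem hωs
      _ = ‖ω - ωs‖ := dist_eq_norm ω ωs
      _ ≤ ‖gradient (fun x => h (x, lam')) ω‖ / S := hkey
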